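/- arXiv:2305.01379 — 3 statements merged into one kernel-verified Lean document; each statement's English description precedes it below -/
import Mathlib

section
/- Let S* be an optimal solution of LogSpecT, i.e., a minimizer of f(S) = ‖S‖_{1,1} − α·Σ_i log((S·1)_i) over the set {S : S = Sᵀ, diag(S)=0, S ≥ 0, S·C∞ = C∞·S}, where α > 0. Then ‖S*‖_{1,1} = α·m. -/
/-- Feasibility for LogSpecT: valid adjacency matrix commuting with C∞. -/
def feas {m : ℕ} (C S : Matrix (Fin m) (Fin m) ℝ) : Prop :=
  S.IsSymm ∧ (∀ i, S i i = 0) ∧ (∀ i j, 0 ≤ S i j) ∧ S * C = C * S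

/-- LogSpecT objective ‖S‖_{1,1} − α·1ᵀ log(S1). -/
noncomputable def obj {m : ℕ} (α : ℝ) (S : Matrix (Fin m) (Fin m) ℝ) : ℝ :=
  (∑ i, ∑ j, |S i j|) - α * ∑ i, Real.log (∑ j, S i j)

/-- Any optimal solution S* of LogSpecT satisfies ‖S*‖_{1,1} = α·m. -/
theorem stmt_13 (m : ℕ) (α : ℝ) (hα : 0 < α) (Cinf : Matrix (Fin m) (Fin m) ℝ)
    (hCinf : Cinf.IsSymm) (Sstar : Matrix (Fin m) (Fin m) ℝ)
    (hfeas : feas Cinf Sstar) (hpos : ∀ i, 0 < ∑ j, Sstar i j)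
    (hopt : ∀ T, feas Cinf T → (∀ i, 0 < ∑ j, T i j) → obj α Sstar ≤ obj α T) :
    (∑ i, ∑ j, |Sstar i j|) = α * m := by
  rcases Nat.eq_zero_or_pos m with hm | hm
  · subst hm; simp
  set N := ∑ i, ∑ j, |Sstar i j| with hNdef
  have hnn := hfeas.2.2.1
  have hNpos : 0 < N := by
    apply Finset.sum_pos _ (by simp [Finset.univ_nonempty_iff, Fin.pos_iff_nonempty.mp hm])
    intro i _
    calc (0:ℝ) < ∑ j, Sstar i j := hpos i
      _ ≤ ∑ j, |Sstar i j| := Finset.sum_le_sum fun j _ => le_abs_self _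
  have key : ∀ t : ℝ, 0 < t → N + α * m * Real.log t ≤ t * N := by
    intro t ht
    have hfeasT : feas Cinf (t • Sstar) := by
      refine ⟨?_, fun i => by simp [hfeas.2.1 i], fun i j => ?_, ?_⟩
      · unfold Matrix.IsSymm
        rw [Matrix.transpose_smul, hfeas.1]
      · have := hnn i j
        simp only [Matrix.smul_apply, smul_eq_mul]
        positivity
      · rw [Matrix.smul_mul, Matrix.mul_smul, hfeas.2.2.2]
    have hrow : ∀ i, ∑ j, (t • Sstar) i j = t * ∑ j, Sstar i j := by
      intro i; simp [Matrix.smul_apply, Finset.mul_sum]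
    have hposT : ∀ i, 0 < ∑ j, (t • Sstar) i j := by
      intro i; rw [hrow i]; exact mul_pos ht (hpos i)
    have h := hopt (t • Sstar) hfeasT hposT
    unfold obj at h
    have habs : ∑ i, ∑ j, |(t • Sstar) i j| = t * N := by
      rw [hNdef, Finset.mul_sum]
      refine Finset.sum_congr rfl fun i _ => ?_
      rw [Finset.mul_sum]
      refine Finset.sum_congr rfl fun j _ => ?_
      simp [Matrix.smul_apply, abs_mul, abs_of_pos ht]
    have hlog : ∑ i, Real.log (∑ j, (t • Sstar) i j)
        = (m : ℝ) * Real.log t + ∑ i, Real.log (∑ j, Sstar i j) := by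
      have : ∀ i : Fin m, Real.log (∑ j, (t • Sstar) i j)
          = Real.log t + Real.log (∑ j, Sstar i j) := by
        intro i
        rw [hrow i, Real.log_mul ht.ne' (hpos i).ne']
      rw [Finset.sum_congr rfl fun i _ => this i, Finset.sum_add_distrib]
      simp [mul_comm]
    rw [habs, hlog] at h
    nlinarith [h]
  by_contra hne
  have hαm : 0 < α * m := by positivity
  set x : ℝ := α * m / N with hxdef
  have hxpos : 0 < x := div_pos hαm hNpos
  have hx1 : x ≠ 1 := by
    intro h1
    exact hne (by rw [hxdef, div_eq_one_iff_eq hNpos.ne'] at h1; linarith)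
  have hk := key x hxpos
  have hxN : x * N = α * m := by rw [hxdef]; exact div_mul_cancel₀ _ hNpos.ne'
  have hlog2 : Real.log (1 / x) < 1 / x - 1 :=
    Real.log_lt_sub_one_of_pos (by positivity) (by
      simpa [one_div, inv_eq_one] using hx1)
  rw [Real.log_div one_ne_zero hxpos.ne', Real.log_one] at hlog2
  have hinv : 1 / x = N / (α * m) := by
    rw [hxdef]; field_simp
  rw [hinv] at hlog2
  -- hlog2 : -log x < N/(αm) - 1, so log x > 1 - N/(αm)
  have : α * m * Real.log x > α * m - N := by
    have hmul := (mul_lt_mul_iff_right₀ hαm).mpr hlog2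
    have h3 : α * ↑m * (N / (α * ↑m)) = N := by field_simp
    nlinarith [hmul, h3]
  rw [hxN] at hk
  linarith
end

section
/- Let S*_n be an optimal solution of rLogSpecT with parameter δ_n > 0 (minimizing f(S) = ‖S‖_{1,1} − α·Σ_i log((S·1)_i) over S ∈ S with ‖C_n·S − S·C_n‖_F ≤ δ_n). Then ‖S*_n‖_{1,1} ≤ α·m. -/
/-- Valid adjacency matrices: symmetric, hollow, nonnegative. -/
def validAdj {m : ℕ} (S : Matrix (Fin m) (Fin m) ℝ) : Prop :=
  S.IsSymm ∧ (∀ i, S i i = 0) ∧ ∀ i j, 0 ≤ S i j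

/-- Frobenius norm of a matrix. -/
noncomputable def frob {m : ℕ} (X : Matrix (Fin m) (Fin m) ℝ) : ℝ :=
  Real.sqrt (∑ i, ∑ j, (X i j) ^ 2)

lemma frob_smul {m : ℕ} (t : ℝ) (ht : 0 ≤ t) (X : Matrix (Fin m) (Fin m) ℝ) :
    frob (t • X) = t * frob X := by
  unfold frob
  have : ∀ i j, ((t • X) i j) ^ 2 = t ^ 2 * (X i j) ^ 2 := by
    intro i j; simp [Matrix.smul_apply, mul_pow]
  simp_rw [this, ← Finset.mul_sum]
  rw [Real.sqrt_mul (sq_nonneg t), Real.sqrt_sq ht]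

set_option maxHeartbeats 1000000 in
/-- Any optimal solution S*_n of rLogSpecT with parameter δ_n > 0 satisfies
‖S*_n‖_{1,1} ≤ α·m. -/
theorem stmt_14 (m : ℕ) (α δn : ℝ) (hα : 0 < α) (hδn : 0 < δn)
    (Cn : Matrix (Fin m) (Fin m) ℝ) (hCn : Cn.IsSymm)
    (Sn : Matrix (Fin m) (Fin m) ℝ)
    (hfeas : validAdj Sn ∧ frob (Cn * Sn - Sn * Cn) ≤ δn)
    (hpos : ∀ i, 0 < ∑ j, Sn i j)
    (hopt : ∀ T, validAdj T → frob (Cn * T - T * Cn) ≤ δn →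
      (∀ i, 0 < ∑ j, T i j) → obj α Sn ≤ obj α T) :
    (∑ i, ∑ j, |Sn i j|) ≤ α * m := by
  by_contra h
  push_neg at h
  set N : ℝ := ∑ i, ∑ j, |Sn i j| with hNdef
  have hαm : 0 ≤ α * m := by positivity
  have hN : 0 < N := lt_of_le_of_lt hαm h
  set t : ℝ := (α * m / N + 1) / 2 with htdef
  have hq : α * m / N < 1 := (div_lt_one hN).mpr h
  have hq0 : 0 ≤ α * m / N := by positivity
  have ht0 : 0 < t := by rw [htdef]; linarith
  have ht1 : t < 1 := by rw [htdef]; linarith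
  have htN : α * m < t * N := by
    have : α * m / N < t := by rw [htdef]; linarith
    calc α * m = (α * m / N) * N := by field_simp
    _ < t * N := by exact mul_lt_mul_of_pos_right this hN
  -- feasibility of t • Sn
  obtain ⟨⟨hsymm, hdiag, hnn⟩, hfr⟩ := hfeas
  have hvalid : validAdj (t • Sn) := by
    refine ⟨?_, ?_, ?_⟩
    · unfold Matrix.IsSymm at *
      rw [Matrix.transpose_smul, hsymm]
    · intro i; simp [Matrix.smul_apply, hdiag i]
    · intro i j; exact mul_nonneg ht0.le (hnn i j)
  have hcomm : Cn * (t • Sn) - (t • Sn) * Cn = t • (Cn * Sn - Sn * Cn) := by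
    rw [Matrix.mul_smul, Matrix.smul_mul, smul_sub]
  have hfr' : frob (Cn * (t • Sn) - (t • Sn) * Cn) ≤ δn := by
    rw [hcomm, frob_smul t ht0.le]
    have h0 : 0 ≤ frob (Cn * Sn - Sn * Cn) := Real.sqrt_nonneg _
    nlinarith
  have hpos' : ∀ i, 0 < ∑ j, (t • Sn) i j := by
    intro i
    simp only [Matrix.smul_apply, smul_eq_mul, ← Finset.mul_sum]
    exact mul_pos ht0 (hpos i)
  have hkey := hopt (t • Sn) hvalid hfr' hpos'
  -- expand obj
  have hsum1 : (∑ i, ∑ j, |(t • Sn) i j|) = t * N := by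
    rw [hNdef, Finset.mul_sum]
    refine Finset.sum_congr rfl fun i _ => ?_
    rw [Finset.mul_sum]
    refine Finset.sum_congr rfl fun j _ => ?_
    rw [Matrix.smul_apply, smul_eq_mul, abs_mul, abs_of_pos ht0]
  have hlog : (∑ i, Real.log (∑ j, (t • Sn) i j)) =
      m * Real.log t + ∑ i, Real.log (∑ j, Sn i j) := by
    have : ∀ i, Real.log (∑ j, (t • Sn) i j)
        = Real.log t + Real.log (∑ j, Sn i j) := by
      intro i
      have : (∑ j, (t • Sn) i j) = t * ∑ j, Sn i j := by
        simp [Matrix.smul_apply, Finset.mul_sum]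
      rw [this, Real.log_mul ht0.ne' (hpos i).ne']
    simp_rw [this, Finset.sum_add_distrib, Finset.sum_const, Finset.card_univ,
      Fintype.card_fin, nsmul_eq_mul]
  have hobj : obj α Sn ≤ obj α (t • Sn) := hkey
  unfold obj at hobj
  rw [hsum1, hlog] at hobj
  -- hobj : N - α * L ≤ t * N - α * (m * log t + L)
  have hlogt : Real.log t⁻¹ ≤ t⁻¹ - 1 := Real.log_le_sub_one_of_pos (by positivity)
  rw [Real.log_inv] at hlogt
  -- -log t ≤ 1/t - 1, so -m*log t ≤ m*(1/t - 1); with hobj: (1-t)*N ≤ -α*m*log t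
  have h1 : (1 - t) * N ≤ -(α * (m * Real.log t)) := by nlinarith
  have h2 : -(α * (m * Real.log t)) ≤ α * m * (t⁻¹ - 1) := by
    have hm : (0:ℝ) ≤ (m:ℝ) := Nat.cast_nonneg m
    nlinarith
  have h3 : (1 - t) * N ≤ α * m * (t⁻¹ - 1) := le_trans h1 h2
  -- multiply by t > 0: t*(1-t)*N ≤ α*m*(1-t), so t*N ≤ α*m, contradiction
  have h4 : t * ((1 - t) * N) ≤ t * (α * m * (t⁻¹ - 1)) :=
    mul_le_mul_of_nonneg_left h3 ht0.le
  have h5 : t * (α * m * (t⁻¹ - 1)) = α * m * (1 - t) := by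
    field_simp
  rw [h5] at h4
  nlinarith
end

section
/- Suppose δ_n ≥ 2·α·m·‖C_n − C∞‖. Then the optimal value f*_n of rLogSpecT satisfies α·m·(1 − log α) ≤ f*_n ≤ f*, where f* is the optimal value of LogSpecT. -/
/-- Euclidean norm of a vector. -/
noncomputable def enorm' {k : ℕ} (x : Fin k → ℝ) : ℝ :=
  Real.sqrt (∑ i, (x i) ^ 2)

/-- Operator (spectral) norm induced by the Euclidean vector norm. -/
noncomputable def opNorm {m : ℕ} (Y : Matrix (Fin m) (Fin m) ℝ) : ℝ :=
  sSup {c : ℝ | ∃ x : Fin m → ℝ, enorm' x ≤ 1 ∧ c = enorm' (Y.mulVec x)}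

open Finset Matrix

-- generic Cauchy-Schwarz in sqrt form
lemma sum_mul_le_sqrt {ι : Type*} (s : Finset ι) (f g : ι → ℝ) :
    ∑ i ∈ s, f i * g i ≤ Real.sqrt (∑ i ∈ s, f i ^ 2) * Real.sqrt (∑ i ∈ s, g i ^ 2) := by
  have h := Finset.sum_mul_sq_le_sq_mul_sq s f g
  calc ∑ i ∈ s, f i * g i ≤ |∑ i ∈ s, f i * g i| := le_abs_self _
    _ = Real.sqrt ((∑ i ∈ s, f i * g i) ^ 2) := (Real.sqrt_sq_eq_abs _).symm
    _ ≤ Real.sqrt ((∑ i ∈ s, f i ^ 2) * ∑ i ∈ s, g i ^ 2) := Real.sqrt_le_sqrt h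
    _ = _ := Real.sqrt_mul (by positivity) _

lemma sqrt_sum_sq_sub_le {ι : Type*} (s : Finset ι) (f g : ι → ℝ) :
    Real.sqrt (∑ i ∈ s, (f i - g i) ^ 2) ≤
      Real.sqrt (∑ i ∈ s, f i ^ 2) + Real.sqrt (∑ i ∈ s, g i ^ 2) := by
  set a := Real.sqrt (∑ i ∈ s, f i ^ 2) with ha
  set b := Real.sqrt (∑ i ∈ s, g i ^ 2) with hb
  have ha2 : a ^ 2 = ∑ i ∈ s, f i ^ 2 := Real.sq_sqrt (by positivity)
  have hb2 : b ^ 2 = ∑ i ∈ s, g i ^ 2 := Real.sq_sqrt (by positivity)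
  have hcs : ∑ i ∈ s, f i * (-g i) ≤ a * b := by
    have := sum_mul_le_sqrt s f (fun i => -g i)
    simpa using this
  have hexp : ∑ i ∈ s, (f i - g i) ^ 2
      = ∑ i ∈ s, f i ^ 2 + 2 * (∑ i ∈ s, f i * (-g i)) + ∑ i ∈ s, g i ^ 2 := by
    rw [Finset.mul_sum, ← Finset.sum_add_distrib, ← Finset.sum_add_distrib]
    exact Finset.sum_congr rfl fun i _ => by ring
  have : ∑ i ∈ s, (f i - g i) ^ 2 ≤ (a + b) ^ 2 := by
    rw [hexp]; nlinarith [hcs]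
  calc Real.sqrt (∑ i ∈ s, (f i - g i) ^ 2) ≤ Real.sqrt ((a + b) ^ 2) := Real.sqrt_le_sqrt this
    _ = a + b := by rw [Real.sqrt_sq (by positivity)]

lemma sqrt_sum_sq_le_sum_abs {ι : Type*} (s : Finset ι) (f : ι → ℝ) :
    Real.sqrt (∑ i ∈ s, f i ^ 2) ≤ ∑ i ∈ s, |f i| := by
  have h : ∑ i ∈ s, f i ^ 2 ≤ (∑ i ∈ s, |f i|) ^ 2 := by
    have := Finset.sum_sq_le_sq_sum_of_nonneg (s := s) (f := fun i => |f i|)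
      (fun i _ => abs_nonneg _)
    simpa [sq_abs] using this
  calc Real.sqrt (∑ i ∈ s, f i ^ 2) ≤ Real.sqrt ((∑ i ∈ s, |f i|) ^ 2) := Real.sqrt_le_sqrt h
    _ = _ := Real.sqrt_sq (by positivity)


lemma enorm_nonneg' {k : ℕ} (x : Fin k → ℝ) : 0 ≤ enorm' x := Real.sqrt_nonneg _

lemma enorm_zero' {k : ℕ} : enorm' (0 : Fin k → ℝ) = 0 := by simp [enorm']

lemma enorm_eq_zero_iff {k : ℕ} {x : Fin k → ℝ} : enorm' x = 0 ↔ x = 0 := by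
  constructor
  · intro h
    rw [enorm', Real.sqrt_eq_zero (by positivity)] at h
    funext i
    have := (Finset.sum_eq_zero_iff_of_nonneg (fun i _ => sq_nonneg (x i))).1 h i (mem_univ i)
    simpa using (pow_eq_zero_iff two_ne_zero).mp this
  · rintro rfl; exact enorm_zero'

lemma enorm_smul' {k : ℕ} {c : ℝ} (hc : 0 ≤ c) (x : Fin k → ℝ) :
    enorm' (c • x) = c * enorm' x := by
  simp only [enorm', Pi.smul_apply, smul_eq_mul, mul_pow, ← Finset.mul_sum]
  rw [Real.sqrt_mul (sq_nonneg c), Real.sqrt_sq hc]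

lemma enorm_mulVec_le_frob {m : ℕ} (Y : Matrix (Fin m) (Fin m) ℝ) (x : Fin m → ℝ) :
    enorm' (Y.mulVec x) ≤ frob Y * enorm' x := by
  have key : ∑ i, (Y.mulVec x i) ^ 2 ≤ (∑ i, ∑ j, Y i j ^ 2) * ∑ j, x j ^ 2 := by
    rw [Finset.sum_mul]
    refine Finset.sum_le_sum fun i _ => ?_
    simpa [Matrix.mulVec, dotProduct] using
      Finset.sum_mul_sq_le_sq_mul_sq Finset.univ (Y i) x
  calc enorm' (Y.mulVec x) = Real.sqrt (∑ i, (Y.mulVec x i) ^ 2) := rfl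
    _ ≤ Real.sqrt ((∑ i, ∑ j, Y i j ^ 2) * ∑ j, x j ^ 2) := Real.sqrt_le_sqrt key
    _ = frob Y * enorm' x := Real.sqrt_mul (by positivity) _

lemma opNorm_bdd {m : ℕ} (Y : Matrix (Fin m) (Fin m) ℝ) :
    BddAbove {c : ℝ | ∃ x : Fin m → ℝ, enorm' x ≤ 1 ∧ c = enorm' (Y.mulVec x)} := by
  refine ⟨frob Y, ?_⟩
  rintro c ⟨x, hx, rfl⟩
  calc enorm' (Y.mulVec x) ≤ frob Y * enorm' x := enorm_mulVec_le_frob Y x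
    _ ≤ frob Y * 1 := by
        exact mul_le_mul_of_nonneg_left hx (Real.sqrt_nonneg _)
    _ = frob Y := mul_one _

lemma opNorm_nonneg' {m : ℕ} (Y : Matrix (Fin m) (Fin m) ℝ) : 0 ≤ opNorm Y := by
  refine le_csSup (opNorm_bdd Y) ⟨0, ?_, ?_⟩
  · simp [enorm_zero']
  · simp [Matrix.mulVec_zero, enorm_zero']

lemma enorm_mulVec_le_opNorm {m : ℕ} (Y : Matrix (Fin m) (Fin m) ℝ) (x : Fin m → ℝ) :
    enorm' (Y.mulVec x) ≤ opNorm Y * enorm' x := by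
  rcases eq_or_ne (enorm' x) 0 with h0 | h0
  · rw [h0, mul_zero, enorm_eq_zero_iff.1 h0, Matrix.mulVec_zero, enorm_zero']
  · have hpos : 0 < enorm' x := lt_of_le_of_ne (enorm_nonneg' x) (Ne.symm h0)
    have hmem : enorm' (Y.mulVec ((enorm' x)⁻¹ • x)) ∈
        {c : ℝ | ∃ x : Fin m → ℝ, enorm' x ≤ 1 ∧ c = enorm' (Y.mulVec x)} := by
      refine ⟨(enorm' x)⁻¹ • x, ?_, rfl⟩
      rw [enorm_smul' (by positivity), inv_mul_cancel₀ h0]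
    have hle := le_csSup (opNorm_bdd Y) hmem
    rw [Matrix.mulVec_smul, enorm_smul' (by positivity)] at hle
    calc enorm' (Y.mulVec x) = enorm' x * ((enorm' x)⁻¹ * enorm' (Y.mulVec x)) := by
          field_simp
      _ ≤ enorm' x * opNorm Y := mul_le_mul_of_nonneg_left hle hpos.le
      _ = opNorm Y * enorm' x := mul_comm _ _

lemma frob_eq {m : ℕ} (X : Matrix (Fin m) (Fin m) ℝ) :
    frob X = Real.sqrt (∑ p : Fin m × Fin m, X p.1 p.2 ^ 2) := by
  rw [frob, Fintype.sum_prod_type]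

lemma frob_sub_le {m : ℕ} (X Y : Matrix (Fin m) (Fin m) ℝ) :
    frob (X - Y) ≤ frob X + frob Y := by
  rw [frob_eq, frob_eq, frob_eq]
  simpa [Matrix.sub_apply] using
    sqrt_sum_sq_sub_le Finset.univ (fun p : Fin m × Fin m => X p.1 p.2)
      (fun p : Fin m × Fin m => Y p.1 p.2)

lemma frob_le_l1 {m : ℕ} (X : Matrix (Fin m) (Fin m) ℝ) :
    frob X ≤ ∑ i, ∑ j, |X i j| := by
  rw [frob_eq, ← Fintype.sum_prod_type (f := fun p : Fin m × Fin m => |X p.1 p.2|)]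
  exact sqrt_sum_sq_le_sum_abs Finset.univ _

-- key: enorm' squared
lemma enorm_sq {k : ℕ} (x : Fin k → ℝ) : enorm' x ^ 2 = ∑ i, x i ^ 2 :=
  Real.sq_sqrt (by positivity)

lemma frob_mul_le {m : ℕ} (A B : Matrix (Fin m) (Fin m) ℝ) :
    frob (A * B) ≤ opNorm A * frob B := by
  have hcol : ∀ j, ∑ i, (A * B) i j ^ 2 ≤ (opNorm A) ^ 2 * ∑ i, B i j ^ 2 := by
    intro j
    have h1 : (fun i => (A * B) i j) = A.mulVec (fun k => B k j) := by
      funext i; simp [Matrix.mul_apply, Matrix.mulVec, dotProduct]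
    have h2 := enorm_mulVec_le_opNorm A (fun k => B k j)
    have h3 : enorm' (A.mulVec (fun k => B k j)) ^ 2
        ≤ (opNorm A * enorm' (fun k => B k j)) ^ 2 :=
      pow_le_pow_left₀ (Real.sqrt_nonneg _) h2 2
    calc ∑ i, (A * B) i j ^ 2 = ∑ i, (A.mulVec (fun k => B k j) i) ^ 2 :=
        Finset.sum_congr rfl fun i _ => by rw [congrFun h1 i]
      _ = enorm' (A.mulVec (fun k => B k j)) ^ 2 := (enorm_sq _).symm
      _ ≤ (opNorm A * enorm' (fun k => B k j)) ^ 2 := h3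
      _ = opNorm A ^ 2 * ∑ i, B i j ^ 2 := by rw [mul_pow, enorm_sq]
  have hsum : ∑ i, ∑ j, (A * B) i j ^ 2 ≤ opNorm A ^ 2 * ∑ i, ∑ j, B i j ^ 2 := by
    rw [Finset.sum_comm (f := fun i j => (A * B) i j ^ 2),
      Finset.sum_comm (f := fun i j => B i j ^ 2), Finset.mul_sum]
    exact Finset.sum_le_sum fun j _ => hcol j
  calc frob (A * B) = Real.sqrt (∑ i, ∑ j, (A * B) i j ^ 2) := rfl
    _ ≤ Real.sqrt (opNorm A ^ 2 * ∑ i, ∑ j, B i j ^ 2) := Real.sqrt_le_sqrt hsum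
    _ = opNorm A * frob B := by
        rw [Real.sqrt_mul (sq_nonneg _), Real.sqrt_sq (opNorm_nonneg' A)]; rfl

lemma frob_mul_right_le {m : ℕ} (A B : Matrix (Fin m) (Fin m) ℝ) (hA : A.IsSymm) :
    frob (B * A) ≤ opNorm A * frob B := by
  have hrow : ∀ i, ∑ j, (B * A) i j ^ 2 ≤ (opNorm A) ^ 2 * ∑ j, B i j ^ 2 := by
    intro i
    have h1 : (fun j => (B * A) i j) = A.mulVec (B i) := by
      funext j
      simp only [Matrix.mul_apply, Matrix.mulVec, dotProduct]
      refine Finset.sum_congr rfl fun k _ => ?_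
      rw [← Matrix.IsSymm.apply hA k j]; ring
    have h3 : enorm' (A.mulVec (B i)) ^ 2 ≤ (opNorm A * enorm' (B i)) ^ 2 :=
      pow_le_pow_left₀ (Real.sqrt_nonneg _) (enorm_mulVec_le_opNorm A (B i)) 2
    calc ∑ j, (B * A) i j ^ 2 = ∑ j, (A.mulVec (B i) j) ^ 2 :=
        Finset.sum_congr rfl fun j _ => by rw [congrFun h1 j]
      _ = enorm' (A.mulVec (B i)) ^ 2 := (enorm_sq _).symm
      _ ≤ (opNorm A * enorm' (B i)) ^ 2 := h3
      _ = opNorm A ^ 2 * ∑ j, B i j ^ 2 := by rw [mul_pow, enorm_sq]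
  have hsum : ∑ i, ∑ j, (B * A) i j ^ 2 ≤ opNorm A ^ 2 * ∑ i, ∑ j, B i j ^ 2 := by
    rw [Finset.mul_sum]
    exact Finset.sum_le_sum fun i _ => hrow i
  calc frob (B * A) = Real.sqrt (∑ i, ∑ j, (B * A) i j ^ 2) := rfl
    _ ≤ Real.sqrt (opNorm A ^ 2 * ∑ i, ∑ j, B i j ^ 2) := Real.sqrt_le_sqrt hsum
    _ = opNorm A * frob B := by
        rw [Real.sqrt_mul (sq_nonneg _), Real.sqrt_sq (opNorm_nonneg' A)]; rfl

lemma log_bound {α r : ℝ} (hα : 0 < α) (hr : 0 < r) :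
    α - α * Real.log α ≤ r - α * Real.log r := by
  have h := Real.log_le_sub_one_of_pos (div_pos hr hα)
  rw [Real.log_div hr.ne' hα.ne'] at h
  have h2 := mul_le_mul_of_nonneg_left h hα.le
  have h3 : α * (r / α - 1) = r - α := by field_simp
  nlinarith

/-- If δ_n ≥ 2αm‖C_n − C∞‖ then the optimal value f*_n of rLogSpecT satisfies
α·m·(1 − log α) ≤ f*_n ≤ f*, where f* is the optimal value of LogSpecT. -/
theorem stmt_15 (m : ℕ) (α δn : ℝ) (hα : 0 < α)
    (Cn Cinf : Matrix (Fin m) (Fin m) ℝ) (hCn : Cn.IsSymm) (hCinf : Cinf.IsSymm)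
    (hδn : 2 * α * m * opNorm (Cn - Cinf) ≤ δn)
    -- S* is an optimal solution of LogSpecT
    (Sstar : Matrix (Fin m) (Fin m) ℝ)
    (hfeas : validAdj Sstar ∧ Sstar * Cinf = Cinf * Sstar)
    (hpos : ∀ i, 0 < ∑ j, Sstar i j)
    (hopt : ∀ T, validAdj T → T * Cinf = Cinf * T → (∀ i, 0 < ∑ j, T i j) →
      obj α Sstar ≤ obj α T)
    -- S*_n is an optimal solution of rLogSpecT with parameter δ_n
    (Sn : Matrix (Fin m) (Fin m) ℝ)
    (hfeasn : validAdj Sn ∧ frob (Cn * Sn - Sn * Cn) ≤ δn)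
    (hposn : ∀ i, 0 < ∑ j, Sn i j)
    (hoptn : ∀ T, validAdj T → frob (Cn * T - T * Cn) ≤ δn →
      (∀ i, 0 < ∑ j, T i j) → obj α Sn ≤ obj α T) :
    α * m * (1 - Real.log α) ≤ obj α Sn ∧ obj α Sn ≤ obj α Sstar := by
  -- lower bound, valid for any nonneg matrix with positive row sums
  have hlow : ∀ (T : Matrix (Fin m) (Fin m) ℝ), (∀ i j, 0 ≤ T i j) →
      (∀ i, 0 < ∑ j, T i j) → α * m * (1 - Real.log α) ≤ obj α T := by
    intro T hTn hTp
    have h1 : obj α T = ∑ i, ((∑ j, T i j) - α * Real.log (∑ j, T i j)) := by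
      unfold obj
      rw [Finset.sum_sub_distrib, ← Finset.mul_sum]
      congr 1
      exact Finset.sum_congr rfl fun i _ =>
        Finset.sum_congr rfl fun j _ => abs_of_nonneg (hTn i j)
    rw [h1]
    calc α * m * (1 - Real.log α) = ∑ _i : Fin m, (α - α * Real.log α) := by
          rw [Finset.sum_const, Finset.card_univ, Fintype.card_fin, nsmul_eq_mul]; ring
      _ ≤ _ := Finset.sum_le_sum fun i _ => log_bound hα (hTp i)
  refine ⟨hlow Sn hfeasn.1.2.2 hposn, ?_⟩
  -- upper bound
  rcases Nat.eq_zero_or_pos m with hm | hm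
  · subst hm
    simp [obj]
  -- nontrivial case
  set s := ∑ i, ∑ j, Sstar i j with hs_def
  have hs_pos : 0 < s :=
    Finset.sum_pos (fun i _ => hpos i) ⟨⟨0, hm⟩, Finset.mem_univ _⟩
  have habs : ∑ i, ∑ j, |Sstar i j| = s :=
    Finset.sum_congr rfl fun i _ =>
      Finset.sum_congr rfl fun j _ => abs_of_nonneg (hfeas.1.2.2 i j)
  have hobjS : obj α Sstar = s - α * ∑ i, Real.log (∑ j, Sstar i j) := by
    unfold obj; rw [habs]
  -- scaling inequality
  have hkey : ∀ t : ℝ, 0 < t → s ≤ t * s - α * (m * Real.log t) := by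
    intro t ht
    have hvalid : validAdj (t • Sstar) := by
      refine ⟨?_, fun i => ?_, fun i j => ?_⟩
      · show (t • Sstar)ᵀ = t • Sstar
        rw [Matrix.transpose_smul, hfeas.1.1]
      · simp [Matrix.smul_apply, smul_eq_mul, hfeas.1.2.1 i]
      · simpa [Matrix.smul_apply, smul_eq_mul] using mul_nonneg ht.le (hfeas.1.2.2 i j)
    have hcomm : (t • Sstar) * Cinf = Cinf * (t • Sstar) := by
      rw [Matrix.smul_mul, Matrix.mul_smul, hfeas.2]
    have hrow : ∀ i, (∑ j, (t • Sstar) i j) = t * ∑ j, Sstar i j := by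
      intro i
      rw [Finset.mul_sum]
      exact Finset.sum_congr rfl fun j _ => by simp [Matrix.smul_apply, smul_eq_mul]
    have hrowpos : ∀ i, 0 < ∑ j, (t • Sstar) i j := fun i =>
      (hrow i) ▸ mul_pos ht (hpos i)
    have hobjT : obj α (t • Sstar)
        = t * s - α * (m * Real.log t + ∑ i, Real.log (∑ j, Sstar i j)) := by
      unfold obj
      have h1 : ∑ i, ∑ j, |(t • Sstar) i j| = t * s := by
        rw [hs_def, Finset.mul_sum]
        refine Finset.sum_congr rfl fun i _ => ?_
        rw [Finset.mul_sum]
        refine Finset.sum_congr rfl fun j _ => ?_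
        rw [Matrix.smul_apply, smul_eq_mul,
          abs_of_nonneg (mul_nonneg ht.le (hfeas.1.2.2 i j))]
      have h3 : ∑ i, Real.log (∑ j, (t • Sstar) i j)
          = (m : ℝ) * Real.log t + ∑ i, Real.log (∑ j, Sstar i j) := by
        calc ∑ i, Real.log (∑ j, (t • Sstar) i j)
            = ∑ i : Fin m, (Real.log t + Real.log (∑ j, Sstar i j)) :=
              Finset.sum_congr rfl fun i _ => by
                rw [hrow i, Real.log_mul ht.ne' (hpos i).ne']
          _ = _ := by
              rw [Finset.sum_add_distrib, Finset.sum_const, Finset.card_univ,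
                Fintype.card_fin, nsmul_eq_mul]
      rw [h1, h3]
    have hle := hopt (t • Sstar) hvalid hcomm hrowpos
    rw [hobjS, hobjT] at hle
    linarith [mul_add α ((m : ℝ) * Real.log t) (∑ i, Real.log (∑ j, Sstar i j))]
  -- s = α m
  have hαm : (0:ℝ) < α * m := mul_pos hα (by exact_mod_cast hm)
  have hs : s = α * m := by
    by_contra hne
    set u := α * m / s with hu_def
    have hu : 0 < u := div_pos hαm hs_pos
    have hu1 : u ≠ 1 := by
      intro h
      rw [hu_def, div_eq_one_iff_eq hs_pos.ne'] at h
      exact hne h.symm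
    have hus : u * s = α * m := div_mul_cancel₀ _ hs_pos.ne'
    have hinv : u⁻¹ = s / (α * m) := by rw [hu_def, inv_div]
    have hlog : 1 - u⁻¹ < Real.log u := by
      have h1 := Real.log_lt_sub_one_of_pos (inv_pos.2 hu) (fun h => hu1 (inv_eq_one.mp h))
      rw [Real.log_inv] at h1
      linarith
    have h6 := mul_lt_mul_of_pos_left hlog hαm
    have h7 : α * m * (1 - u⁻¹) = α * m - s := by
      rw [hinv]; field_simp
    have hk := hkey u hu
    have h8 : α * (↑m * Real.log u) = α * m * Real.log u := by ring
    linarith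
  -- Sstar is feasible for rLogSpecT
  have hSfrob : frob Sstar ≤ α * m := by
    calc frob Sstar ≤ ∑ i, ∑ j, |Sstar i j| := frob_le_l1 _
      _ = s := habs
      _ = α * m := hs
  have hA : (Cn - Cinf).IsSymm := hCn.sub hCinf
  have hcomm2 : Cn * Sstar - Sstar * Cn
      = (Cn - Cinf) * Sstar - Sstar * (Cn - Cinf) := by
    rw [Matrix.sub_mul, Matrix.mul_sub, hfeas.2]
    abel
  have hfeasS : frob (Cn * Sstar - Sstar * Cn) ≤ δn := by
    rw [hcomm2]
    have hop := opNorm_nonneg' (Cn - Cinf)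
    calc frob ((Cn - Cinf) * Sstar - Sstar * (Cn - Cinf))
        ≤ frob ((Cn - Cinf) * Sstar) + frob (Sstar * (Cn - Cinf)) := frob_sub_le _ _
      _ ≤ opNorm (Cn - Cinf) * frob Sstar + opNorm (Cn - Cinf) * frob Sstar :=
          add_le_add (frob_mul_le _ _) (frob_mul_right_le _ _ hA)
      _ = 2 * opNorm (Cn - Cinf) * frob Sstar := by ring
      _ ≤ 2 * opNorm (Cn - Cinf) * (α * m) := by
          exact mul_le_mul_of_nonneg_left hSfrob (by linarith)
      _ = 2 * α * m * opNorm (Cn - Cinf) := by ring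
      _ ≤ δn := hδn
  exact hoptn Sstar hfeas.1 hfeasS hpos
end
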